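/- (Theorem 4.2) Let α : ℝ → ℝ⁴ be smooth and let V₁, V₂, V₃, V₄ : ℝ → ℝ⁴ be smooth maps forming, at every σ, a linearly independent family, with continuous functions 𝒦₁, 𝒦₂, 𝒦₃ : ℝ → ℝ and signs μ₁,…,μ₅ ∈ {-1,1}, such that α' = V₁ and the equiform Frenet equations hold: V₁' = 𝒦₁V₁ + V₂, V₂' = μ₁V₁ + 𝒦₁V₂ + μ₂𝒦₂V₃, V₃' = μ₃𝒦₂V₂ + 𝒦₁V₃ + μ₄𝒦₃V₄, V₄' = μ₅𝒦₃V₃ + 𝒦₁V₄. Assume 𝒦₁(σ) ≠ 0 and 𝒦₂(σ) ≠ 0 for all σ. Then 𝒦₃ ≡ 0 if and only if α lies fully in a hyperplane of E₁⁴, i.e. there exists a nonzero vector q ∈ ℝ⁴ such that B(α(σ) - α(0), q) = 0 for all σ. -/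

import Mathlib

noncomputable section

/-- The Minkowski bilinear form on ℝ⁴ with signature (-,+,+,+). -/
def B (x y : Fin 4 → ℝ) : ℝ :=
  -(x 0 * y 0) + x 1 * y 1 + x 2 * y 2 + x 3 * y 3

lemma B_hasDerivAt {V : ℝ → Fin 4 → ℝ} {W q : Fin 4 → ℝ} {σ : ℝ}
    (h : HasDerivAt V W σ) : HasDerivAt (fun s => B (V s) q) (B W q) σ := by
  have hi : ∀ i, HasDerivAt (fun s => V s i) (W i) σ := hasDerivAt_pi.mp h
  have := ((((hi 0).mul_const (q 0)).neg.add ((hi 1).mul_const (q 1))).add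
      ((hi 2).mul_const (q 2))).add ((hi 3).mul_const (q 3))
  exact this

lemma B_add_left (x y q : Fin 4 → ℝ) : B (x + y) q = B x q + B y q := by
  simp [B]; ring

lemma B_smul_left (a : ℝ) (x q : Fin 4 → ℝ) : B (a • x) q = a * B x q := by
  simp [B]; ring


set_option maxHeartbeats 1000000 in
/-- A linear 3×3 ODE system with continuous coefficients and zero initial value
has only the zero solution. -/
lemma linear_ode_zero (f1 f2 f3 k1 k2 : ℝ → ℝ) (m1 m2 m3 : ℝ)
    (hm1 : |m1| = 1) (hm2 : |m2| = 1) (hm3 : |m3| = 1)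
    (hk1 : Continuous k1) (hk2 : Continuous k2)
    (hd1 : ∀ t, HasDerivAt f1 (k1 t * f1 t + f2 t) t)
    (hd2 : ∀ t, HasDerivAt f2 (m1 * f1 t + k1 t * f2 t + m2 * k2 t * f3 t) t)
    (hd3 : ∀ t, HasDerivAt f3 (m3 * k2 t * f2 t + k1 t * f3 t) t)
    (h01 : f1 0 = 0) (h02 : f2 0 = 0) (h03 : f3 0 = 0) :
    ∀ s, f1 s = 0 ∧ f2 s = 0 ∧ f3 s = 0 := by
  intro s
  set g : ℝ → ℝ × ℝ × ℝ := fun t => (f1 t, f2 t, f3 t) with hg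
  suffices h : g s = 0 by
    refine ⟨congrArg (fun p : ℝ × ℝ × ℝ => p.1) h,
      congrArg (fun p : ℝ × ℝ × ℝ => p.2.1) h,
      congrArg (fun p : ℝ × ℝ × ℝ => p.2.2) h⟩
  set a : ℝ := -(|s| + 1) with ha
  set b : ℝ := |s| + 1 with hb
  have habs : (0:ℝ) ≤ |s| := abs_nonneg s
  have hab : a < b := by simp only [ha, hb]; linarith
  have hs_mem : s ∈ Set.Ioo a b := by
    constructor
    · simp only [ha, hb]
      cases abs_cases s with
      | inl h => linarith [h.1]
      | inr h => linarith [h.1]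
    · simp only [hb]
      cases abs_cases s with
      | inl h => linarith [h.1]
      | inr h => linarith [h.1]
  have h0_mem : (0:ℝ) ∈ Set.Ioo a b := by
    constructor
    · simp only [ha]; linarith
    · simp only [hb]; linarith
  -- clamping function
  set c : ℝ → ℝ := fun t => max a (min b t) with hc
  have hc_mem : ∀ t, c t ∈ Set.Icc a b := fun t =>
    ⟨le_max_left _ _, max_le hab.le (min_le_left _ _)⟩
  have hc_id : ∀ t ∈ Set.Ioo a b, c t = t := by
    intro t ht
    simp only [hc]
    rw [min_eq_right ht.2.le, max_eq_right ht.1.le]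
  -- bound on the coefficients
  set F : ℝ → ℝ := fun t => max (max |k1 t| |k2 t|) 1 with hF
  have hFcont : Continuous F := ((hk1.abs.max hk2.abs).max continuous_const)
  obtain ⟨M, hM⟩ := isCompact_Icc.exists_bound_of_continuousOn
    (s := Set.Icc a b) hFcont.continuousOn
  have hMbound : ∀ t ∈ Set.Icc a b, |k1 t| ≤ M ∧ |k2 t| ≤ M ∧ 1 ≤ M := by
    intro t ht
    have h2 : F t ≤ M := le_trans (le_abs_self _) (hM t ht)
    simp only [hF, max_le_iff] at h2
    exact ⟨h2.1.1, h2.1.2, h2.2⟩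
  have hM1 : (1:ℝ) ≤ M := (hMbound a (Set.left_mem_Icc.mpr hab.le)).2.2
  have hMpos : (0:ℝ) < M := lt_of_lt_of_le one_pos hM1
  -- the vector field
  set v : ℝ → ℝ × ℝ × ℝ → ℝ × ℝ × ℝ := fun t y =>
    (k1 (c t) * y.1 + y.2.1,
      m1 * y.1 + k1 (c t) * y.2.1 + m2 * k2 (c t) * y.2.2,
      m3 * k2 (c t) * y.2.1 + k1 (c t) * y.2.2) with hv
  have hK : (0:ℝ) ≤ 3 * M := by linarith
  have hlip : ∀ t, LipschitzOnWith (⟨3 * M, hK⟩ : NNReal) (v t) Set.univ := by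
    intro t
    apply LipschitzWith.lipschitzOnWith
    apply LipschitzWith.of_dist_le_mul
    intro x y
    show dist (v t x) (v t y) ≤ 3 * M * dist x y
    have hd : (0:ℝ) ≤ dist x y := dist_nonneg
    have hfst : dist x.1 y.1 ≤ dist x y := by
      rw [Prod.dist_eq]; exact le_max_left _ _
    have hsnd : dist x.2 y.2 ≤ dist x y := by
      rw [Prod.dist_eq]; exact le_max_right _ _
    have h1 : |x.1 - y.1| ≤ dist x y := by rwa [Real.dist_eq] at hfst
    have h21 : |x.2.1 - y.2.1| ≤ dist x y := by
      have := le_trans (by rw [Prod.dist_eq]; exact le_max_left _ _ :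
        dist x.2.1 y.2.1 ≤ dist x.2 y.2) hsnd
      rwa [Real.dist_eq] at this
    have h22 : |x.2.2 - y.2.2| ≤ dist x y := by
      have := le_trans (by rw [Prod.dist_eq]; exact le_max_right _ _ :
        dist x.2.2 y.2.2 ≤ dist x.2 y.2) hsnd
      rwa [Real.dist_eq] at this
    have hk1b : |k1 (c t)| ≤ M := (hMbound _ (hc_mem t)).1
    have hk2b : |k2 (c t)| ≤ M := (hMbound _ (hc_mem t)).2.1
    have e1 : |k1 (c t) * (x.1 - y.1)| ≤ M * dist x y := by
      rw [abs_mul]; exact mul_le_mul hk1b h1 (abs_nonneg _) hMpos.le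
    have e2 : |k1 (c t) * (x.2.1 - y.2.1)| ≤ M * dist x y := by
      rw [abs_mul]; exact mul_le_mul hk1b h21 (abs_nonneg _) hMpos.le
    have e3 : |k1 (c t) * (x.2.2 - y.2.2)| ≤ M * dist x y := by
      rw [abs_mul]; exact mul_le_mul hk1b h22 (abs_nonneg _) hMpos.le
    have e4 : |m2 * k2 (c t) * (x.2.2 - y.2.2)| ≤ M * dist x y := by
      rw [abs_mul, abs_mul, hm2, one_mul]
      exact mul_le_mul hk2b h22 (abs_nonneg _) hMpos.le
    have e5 : |m3 * k2 (c t) * (x.2.1 - y.2.1)| ≤ M * dist x y := by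
      rw [abs_mul, abs_mul, hm3, one_mul]
      exact mul_le_mul hk2b h21 (abs_nonneg _) hMpos.le
    have e6 : |m1 * (x.1 - y.1)| ≤ M * dist x y := by
      rw [abs_mul, hm1, one_mul]
      nlinarith
    rw [Prod.dist_eq, Prod.dist_eq]
    refine max_le ?_ (max_le ?_ ?_) <;> simp only [hv, Real.dist_eq]
    · calc |k1 (c t) * x.1 + x.2.1 - (k1 (c t) * y.1 + y.2.1)|
          = |k1 (c t) * (x.1 - y.1) + (x.2.1 - y.2.1)| := by ring_nf
        _ ≤ |k1 (c t) * (x.1 - y.1)| + |x.2.1 - y.2.1| := abs_add_le _ _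
        _ ≤ 3 * M * dist x y := by nlinarith
    · calc |m1 * x.1 + k1 (c t) * x.2.1 + m2 * k2 (c t) * x.2.2 -
            (m1 * y.1 + k1 (c t) * y.2.1 + m2 * k2 (c t) * y.2.2)|
          = |m1 * (x.1 - y.1) + (k1 (c t) * (x.2.1 - y.2.1) +
              m2 * k2 (c t) * (x.2.2 - y.2.2))| := by ring_nf
        _ ≤ |m1 * (x.1 - y.1)| + (|k1 (c t) * (x.2.1 - y.2.1)| +
              |m2 * k2 (c t) * (x.2.2 - y.2.2)|) :=
            le_trans (abs_add_le _ _) (by gcongr; exact abs_add_le _ _)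
        _ ≤ 3 * M * dist x y := by nlinarith
    · calc |m3 * k2 (c t) * x.2.1 + k1 (c t) * x.2.2 -
            (m3 * k2 (c t) * y.2.1 + k1 (c t) * y.2.2)|
          = |m3 * k2 (c t) * (x.2.1 - y.2.1) + k1 (c t) * (x.2.2 - y.2.2)| := by ring_nf
        _ ≤ |m3 * k2 (c t) * (x.2.1 - y.2.1)| + |k1 (c t) * (x.2.2 - y.2.2)| := abs_add_le _ _
        _ ≤ 3 * M * dist x y := by nlinarith
  have hgderiv : ∀ t ∈ Set.Ioo a b, HasDerivAt g (v t (g t)) t := by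
    intro t ht
    have hct : c t = t := hc_id t ht
    have hD : HasDerivAt g (k1 t * f1 t + f2 t,
        m1 * f1 t + k1 t * f2 t + m2 * k2 t * f3 t,
        m3 * k2 t * f2 t + k1 t * f3 t) t := by
      rw [hg]; exact (hd1 t).prodMk ((hd2 t).prodMk (hd3 t))
    have hval : (k1 t * f1 t + f2 t,
        m1 * f1 t + k1 t * f2 t + m2 * k2 t * f3 t,
        m3 * k2 t * f2 t + k1 t * f3 t) = v t (g t) := by
      simp only [hv, hg, hct]
    exact hval ▸ hD
  have hzderiv : ∀ t ∈ Set.Ioo a b,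
      HasDerivAt (fun _ : ℝ => (0 : ℝ × ℝ × ℝ)) (v t 0) t := by
    intro t ht
    have : v t 0 = 0 := by
      simp only [hv, Prod.ext_iff]
      norm_num
    rw [this]
    exact hasDerivAt_const t 0
  have heq0 : g 0 = (fun _ : ℝ => (0 : ℝ × ℝ × ℝ)) 0 := by
    simp only [hg]
    rw [h01, h02, h03]
    rfl
  have := ODE_solution_unique_of_mem_Ioo (s := fun _ => Set.univ) (fun t _ => hlip t) h0_mem
    (fun t ht => ⟨hgderiv t ht, Set.mem_univ _⟩)
    (fun t ht => ⟨hzderiv t ht, Set.mem_univ _⟩) heq0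
  exact this hs_mem

set_option maxHeartbeats 1000000 in
theorem spacelike_K₃_zero_iff_hyperplanar
    (α V₁ V₂ V₃ V₄ : ℝ → Fin 4 → ℝ) (K₁ K₂ K₃ : ℝ → ℝ)
    (μ₁ μ₂ μ₃ μ₄ μ₅ : ℝ)
    (hμ₁ : μ₁ = -1 ∨ μ₁ = 1) (hμ₂ : μ₂ = -1 ∨ μ₂ = 1) (hμ₃ : μ₃ = -1 ∨ μ₃ = 1)
    (hμ₄ : μ₄ = -1 ∨ μ₄ = 1) (hμ₅ : μ₅ = -1 ∨ μ₅ = 1)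
    (hα : ContDiff ℝ (⊤ : ℕ∞) α)
    (hV₁ : ContDiff ℝ (⊤ : ℕ∞) V₁) (hV₂ : ContDiff ℝ (⊤ : ℕ∞) V₂)
    (hV₃ : ContDiff ℝ (⊤ : ℕ∞) V₃) (hV₄ : ContDiff ℝ (⊤ : ℕ∞) V₄)
    (hindep : ∀ σ, LinearIndependent ℝ ![V₁ σ, V₂ σ, V₃ σ, V₄ σ])
    (hK₁c : Continuous K₁) (hK₂c : Continuous K₂) (hK₃c : Continuous K₃)
    (hα' : ∀ σ, deriv α σ = V₁ σ)
    (hV₁' : ∀ σ, deriv V₁ σ = K₁ σ • V₁ σ + V₂ σ)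
    (hV₂' : ∀ σ, deriv V₂ σ = μ₁ • V₁ σ + K₁ σ • V₂ σ + (μ₂ * K₂ σ) • V₃ σ)
    (hV₃' : ∀ σ, deriv V₃ σ = (μ₃ * K₂ σ) • V₂ σ + K₁ σ • V₃ σ + (μ₄ * K₃ σ) • V₄ σ)
    (hV₄' : ∀ σ, deriv V₄ σ = (μ₅ * K₃ σ) • V₃ σ + K₁ σ • V₄ σ)
    (hK₁ne : ∀ σ, K₁ σ ≠ 0) (hK₂ne : ∀ σ, K₂ σ ≠ 0) :
    (∀ σ, K₃ σ = 0) ↔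
      ∃ q : Fin 4 → ℝ, q ≠ 0 ∧ ∀ σ, B (α σ - α 0) q = 0 := by
  have hμ₂ne : μ₂ ≠ 0 := by rcases hμ₂ with h | h <;> rw [h] <;> norm_num
  have hμ₄ne : μ₄ ≠ 0 := by rcases hμ₄ with h | h <;> rw [h] <;> norm_num
  have hDα : ∀ σ, HasDerivAt α (V₁ σ) σ := fun σ =>
    hα' σ ▸ (hα.differentiable (by simp) σ).hasDerivAt
  have hD1 : ∀ σ, HasDerivAt V₁ (K₁ σ • V₁ σ + V₂ σ) σ := fun σ =>
    hV₁' σ ▸ (hV₁.differentiable (by simp) σ).hasDerivAt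
  have hD2 : ∀ σ, HasDerivAt V₂ (μ₁ • V₁ σ + K₁ σ • V₂ σ + (μ₂ * K₂ σ) • V₃ σ) σ := fun σ =>
    hV₂' σ ▸ (hV₂.differentiable (by simp) σ).hasDerivAt
  have hD3 : ∀ σ, HasDerivAt V₃ ((μ₃ * K₂ σ) • V₂ σ + K₁ σ • V₃ σ + (μ₄ * K₃ σ) • V₄ σ) σ :=
    fun σ => hV₃' σ ▸ (hV₃.differentiable (by simp) σ).hasDerivAt
  constructor
  · -- forward direction
    intro hK3
    -- Step 1: find q orthogonal (w.r.t. B) to V₁ 0, V₂ 0, V₃ 0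
    set T : (Fin 4 → ℝ) →ₗ[ℝ] (Fin 3 → ℝ) :=
      { toFun := fun q => ![B (V₁ 0) q, B (V₂ 0) q, B (V₃ 0) q]
        map_add' := by intro x y; funext i; fin_cases i <;> (simp [B]; ring)
        map_smul' := by intro c x; funext i; fin_cases i <;> (simp [B]; ring) } with hT
    have hTnotinj : ¬ Function.Injective T := by
      intro h
      have := LinearMap.finrank_le_finrank_of_injective h
      simp [Module.finrank_fin_fun] at this
    have hker : LinearMap.ker T ≠ ⊥ := fun h => hTnotinj (LinearMap.ker_eq_bot.mp h)
    obtain ⟨q, hqmem, hq0⟩ := Submodule.exists_mem_ne_zero_of_ne_bot hker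
    have hqker : T q = 0 := hqmem
    have hq1 : B (V₁ 0) q = 0 := by simpa [hT] using congrFun hqker 0
    have hq2 : B (V₂ 0) q = 0 := by simpa [hT] using congrFun hqker 1
    have hq3 : B (V₃ 0) q = 0 := by simpa [hT] using congrFun hqker 2
    -- Step 2: by ODE uniqueness, B (Vᵢ s) q = 0 for all s
    have hμ₁abs : |μ₁| = 1 := by rcases hμ₁ with h | h <;> rw [h] <;> norm_num
    have hμ₂abs : |μ₂| = 1 := by rcases hμ₂ with h | h <;> rw [h] <;> norm_num
    have hμ₃abs : |μ₃| = 1 := by rcases hμ₃ with h | h <;> rw [h] <;> norm_num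
    have hd1 : ∀ t, HasDerivAt (fun u => B (V₁ u) q)
        (K₁ t * B (V₁ t) q + B (V₂ t) q) t := by
      intro t
      have h := B_hasDerivAt (q := q) (hD1 t)
      rwa [B_add_left, B_smul_left] at h
    have hd2 : ∀ t, HasDerivAt (fun u => B (V₂ u) q)
        (μ₁ * B (V₁ t) q + K₁ t * B (V₂ t) q + μ₂ * K₂ t * B (V₃ t) q) t := by
      intro t
      have h := B_hasDerivAt (q := q) (hD2 t)
      rw [B_add_left, B_add_left, B_smul_left, B_smul_left, B_smul_left] at h
      exact h
    have hd3 : ∀ t, HasDerivAt (fun u => B (V₃ u) q)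
        (μ₃ * K₂ t * B (V₂ t) q + K₁ t * B (V₃ t) q) t := by
      intro t
      have h := B_hasDerivAt (q := q) (hD3 t)
      rw [B_add_left, B_add_left, B_smul_left, B_smul_left, B_smul_left, hK3 t] at h
      convert h using 1
      ring
    have hode := linear_ode_zero (fun u => B (V₁ u) q) (fun u => B (V₂ u) q)
      (fun u => B (V₃ u) q) K₁ K₂ μ₁ μ₂ μ₃ hμ₁abs hμ₂abs hμ₃abs hK₁c hK₂c
      hd1 hd2 hd3 hq1 hq2 hq3
    have hBV₁ : ∀ s, B (V₁ s) q = 0 := fun s => (hode s).1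
    refine ⟨q, hq0, ?_⟩
    intro σ
    have hder : ∀ s, HasDerivAt (fun s => B (α s - α 0) q) 0 s := by
      intro s
      have h := B_hasDerivAt (q := q) ((hDα s).sub_const (α 0))
      rwa [hBV₁ s] at h
    have hconst : B (α σ - α 0) q = B (α 0 - α 0) q :=
      is_const_of_deriv_eq_zero (fun s => (hder s).differentiableAt)
        (fun s => (hder s).deriv) σ 0
    rw [hconst]
    simp [B]
  · -- backward direction
    rintro ⟨q, hq0, hq⟩ σ
    have hf1 : ∀ s, B (V₁ s) q = 0 := by
      intro s
      have h1 : HasDerivAt (fun s => B (α s - α 0) q) (B (V₁ s) q) s :=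
        B_hasDerivAt ((hDα s).sub_const (α 0))
      have h2 : (fun s => B (α s - α 0) q) = fun _ => (0:ℝ) := funext hq
      rw [h2] at h1
      exact h1.unique (hasDerivAt_const s 0)
    have hf2 : ∀ s, B (V₂ s) q = 0 := by
      intro s
      have h1 : HasDerivAt (fun s => B (V₁ s) q) (B (K₁ s • V₁ s + V₂ s) q) s :=
        B_hasDerivAt (hD1 s)
      have h2 : (fun s => B (V₁ s) q) = fun _ => (0:ℝ) := funext hf1
      rw [h2] at h1
      have h3 : B (K₁ s • V₁ s + V₂ s) q = 0 := h1.unique (hasDerivAt_const s 0)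
      rw [B_add_left, B_smul_left, hf1 s] at h3
      linarith
    have hf3 : ∀ s, B (V₃ s) q = 0 := by
      intro s
      have h1 : HasDerivAt (fun s => B (V₂ s) q)
          (B (μ₁ • V₁ s + K₁ s • V₂ s + (μ₂ * K₂ s) • V₃ s) q) s :=
        B_hasDerivAt (hD2 s)
      have h2 : (fun s => B (V₂ s) q) = fun _ => (0:ℝ) := funext hf2
      rw [h2] at h1
      have h3 : B (μ₁ • V₁ s + K₁ s • V₂ s + (μ₂ * K₂ s) • V₃ s) q = 0 :=
        h1.unique (hasDerivAt_const s 0)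
      rw [B_add_left, B_add_left, B_smul_left, B_smul_left, B_smul_left,
        hf1 s, hf2 s] at h3
      have : μ₂ * K₂ s * B (V₃ s) q = 0 := by linarith
      rcases mul_eq_zero.mp this with h | h
      · rcases mul_eq_zero.mp h with h' | h'
        · exact (hμ₂ne h').elim
        · exact (hK₂ne s h').elim
      · exact h
    -- at σ: derivative of f₃ gives μ₄ K₃ σ B(V₄ σ) q = 0
    have h1 : HasDerivAt (fun s => B (V₃ s) q)
        (B ((μ₃ * K₂ σ) • V₂ σ + K₁ σ • V₃ σ + (μ₄ * K₃ σ) • V₄ σ) q) σ :=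
      B_hasDerivAt (hD3 σ)
    have h2 : (fun s => B (V₃ s) q) = fun _ => (0:ℝ) := funext hf3
    rw [h2] at h1
    have h3 : B ((μ₃ * K₂ σ) • V₂ σ + K₁ σ • V₃ σ + (μ₄ * K₃ σ) • V₄ σ) q = 0 :=
      h1.unique (hasDerivAt_const σ 0)
    rw [B_add_left, B_add_left, B_smul_left, B_smul_left, B_smul_left,
      hf2 σ, hf3 σ] at h3
    have h4 : μ₄ * K₃ σ * B (V₄ σ) q = 0 := by linarith
    by_contra hK3ne
    have hf4 : B (V₄ σ) q = 0 := by
      rcases mul_eq_zero.mp h4 with h | h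
      · rcases mul_eq_zero.mp h with h' | h'
        · exact (hμ₄ne h').elim
        · exact (hK3ne h').elim
      · exact h
    -- q is B-orthogonal to a basis, hence q = 0
    set φ : (Fin 4 → ℝ) →ₗ[ℝ] ℝ :=
      { toFun := fun y => B y q
        map_add' := by intro x y; simp [B]; ring
        map_smul' := by intro c x; simp [B]; ring } with hφ
    have hspan : Submodule.span ℝ (Set.range ![V₁ σ, V₂ σ, V₃ σ, V₄ σ]) = ⊤ :=
      (hindep σ).span_eq_top_of_card_eq_finrank (by simp [Module.finrank_fin_fun])
    have hφ0 : φ = 0 := by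
      apply LinearMap.ext_on hspan
      rintro x ⟨i, rfl⟩
      fin_cases i <;>
        simp only [hφ, LinearMap.coe_mk, AddHom.coe_mk, LinearMap.zero_apply,
          Matrix.cons_val_zero, Matrix.cons_val_one, Matrix.head_cons] <;>
        first
          | exact hf1 σ
          | exact hf2 σ
          | exact hf3 σ
          | exact hf4
    have hqz : q = 0 := by
      funext i
      fin_cases i
      · have := congrArg (fun f => f (Pi.single 0 1 : Fin 4 → ℝ)) hφ0
        simp [hφ, B, Pi.single_apply] at this
        simpa using this
      · have := congrArg (fun f => f (Pi.single 1 1 : Fin 4 → ℝ)) hφ0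
        simp [hφ, B, Pi.single_apply] at this
        simpa using this
      · have := congrArg (fun f => f (Pi.single 2 1 : Fin 4 → ℝ)) hφ0
        simp [hφ, B, Pi.single_apply] at this
        simpa using this
      · have := congrArg (fun f => f (Pi.single 3 1 : Fin 4 → ℝ)) hφ0
        simp [hφ, B, Pi.single_apply] at this
        simpa using this
    exact hq0 hqz
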